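/- Suppose ρ ∈ C¹(Ω) ∩ C(Ω̄), ρ > 0 in Ω, θ ∈ C²(Ω̄), ψ ∈ C²(ℝ³) satisfy K∇(ρθ) = -ρ∇ψ in Ω, -Δθ = ερ in Ω, Δψ = ρ in ℝ³ (ρ extended by 0), with ∫_Ω ρ = M > 0 and εK = 1, and assume ∫_Ω (θ/ρ)|∇ρ|² dx > 0 and the boundary trace satisfies ∫_{∂Ω} θ ∇ρ·n dS ≤ 0. Then a contradiction follows; i.e. no such regular solution exists with εK = 1. -/

import Mathlib

open MeasureTheory RealInnerProductSpace

local notation "E" => EuclideanSpace ℝ (Fin 3)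

open Topology Filter

set_option maxHeartbeats 2000000

/-- The Laplacian of a scalar field on `ℝ³`. -/
noncomputable def lap (f : E → ℝ) (x : E) : ℝ :=
  ∑ i : Fin 3,
    fderiv ℝ (fun y => fderiv ℝ f y (EuclideanSpace.single i 1)) x (EuclideanSpace.single i 1)

/-- The divergence of a vector field on `ℝ³`. -/
noncomputable def divg (W : E → E) (x : E) : ℝ :=
  ∑ i : Fin 3, fderiv ℝ (fun y => W y i) x (EuclideanSpace.single i 1)

lemma grad_coord (f : E → ℝ) (y : E) (i : Fin 3) :
    gradient f y i = fderiv ℝ f y (EuclideanSpace.single i 1) := by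
  have h2 : ⟪gradient f y, EuclideanSpace.single i (1:ℝ)⟫ = fderiv ℝ f y (EuclideanSpace.single i 1) :=
    InnerProductSpace.toDual_symm_apply
  rw [EuclideanSpace.inner_single_right] at h2
  simpa using h2

lemma norm_sq_coord (v : E) : ‖v‖^2 = ∑ i, (v i)^2 := by
  rw [← real_inner_self_eq_norm_sq, PiLp.inner_apply]
  simp [RCLike.inner_apply, pow_two]

/-- auxiliary vector field `∇θ + K⁻¹ ∇ψ`. -/
noncomputable def auxG (K : ℝ) (θ ψ : E → ℝ) : E → E :=
  fun y => gradient θ y + K⁻¹ • gradient ψ y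

/-- cutoff field `η(kρ - 1) • (-ρ) • auxG`. -/
noncomputable def auxW (K : ℝ) (ρ θ ψ : E → ℝ) (k : ℕ) : E → E :=
  fun y => Real.smoothTransition ((k:ℝ) * ρ y - 1) • ((-ρ y) • auxG K θ ψ y)

/-- the scalar factor appearing in div of the cutoff field. -/
noncomputable def auxζ (ρ : E → ℝ) (k : ℕ) (x : E) : ℝ :=
  Real.smoothTransition ((k:ℝ) * ρ x - 1)
    + (k:ℝ) * ρ x * deriv Real.smoothTransition ((k:ℝ) * ρ x - 1)

lemma auxW_coord (K : ℝ) (ρ θ ψ : E → ℝ) (k : ℕ) (i : Fin 3) :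
    (fun y => auxW K ρ θ ψ k y i)
      = fun y => Real.smoothTransition ((k:ℝ) * ρ y - 1) *
          ((-ρ y) * (fderiv ℝ θ y (EuclideanSpace.single i 1)
            + K⁻¹ * fderiv ℝ ψ y (EuclideanSpace.single i 1))) := by
  funext y
  simp [auxW, auxG, PiLp.smul_apply, PiLp.add_apply, smul_eq_mul, grad_coord]
  ring

/-- Nonexistence for `εK = 1`: suppose `ρ ∈ C¹(Ω) ∩ C(Ω̄)` with `ρ > 0` in `Ω`,
`θ ∈ C²(Ω̄)`, `ψ ∈ C²(ℝ³)` satisfy `K∇(ρθ) = -ρ∇ψ` in `Ω`, `-Δθ = ερ` in `Ω`, `Δψ = ρ`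
in `ℝ³` (with `ρ` extended by zero), with total mass `M > 0` and `εK = 1`, and assume
`∫_Ω (θ/ρ)|∇ρ|² dx > 0` while the boundary trace satisfies `∫_{∂Ω} θ∇ρ·n dS ≤ 0`
(the trace being defined by `θ∇ρ = -ρ∇θ - (ρ/K)∇ψ`, and the boundary data `(μ, n)`
satisfying the divergence theorem).  Then a contradiction follows: no such regular
solution exists. -/
theorem no_solution_epsilonK_eq_one
    (K ε M : ℝ) (hK : 0 < K) (hε : 0 < ε) (hM : 0 < M) (hεK : ε * K = 1)
    (Ω : Set E) (hΩo : IsOpen Ω) (hΩb : Bornology.IsBounded Ω)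
    (μ : Measure E) (n : E → E)
    (hn : ∀ x ∈ frontier Ω, ‖n x‖ = 1)
    (hdivthm : ∀ W : E → E, ContDiffOn ℝ 1 W (closure Ω) →
      ∫ x in Ω, divg W x = ∫ x in frontier Ω, ⟪W x, n x⟫ ∂μ)
    (ρ θ ψ : E → ℝ)
    (hρ : ContDiffOn ℝ 1 ρ Ω) (hρc : ContinuousOn ρ (closure Ω))
    (hρpos : ∀ x ∈ Ω, 0 < ρ x)
    (hθ : ContDiffOn ℝ 2 θ (closure Ω)) (hψ : ContDiff ℝ 2 ψ)
    (hmom : ∀ x ∈ Ω, K • gradient (fun y => ρ y * θ y) x = -(ρ x) • gradient ψ x)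
    (hheat : ∀ x ∈ Ω, - lap θ x = ε * ρ x)
    (hpois : ∀ x : E, lap ψ x = Set.indicator Ω ρ x)
    (hmass : ∫ x in Ω, ρ x = M)
    (hint : 0 < ∫ x in Ω, (θ x / ρ x) * ‖gradient ρ x‖ ^ 2)
    (htrace : ∫ x in frontier Ω,
        ⟪-(ρ x) • gradient θ x - (ρ x / K) • gradient ψ x, n x⟫ ∂μ ≤ 0) :
    False := by
  have hKne : K ≠ 0 := ne_of_gt hK
  have hεinv : ε = K⁻¹ := eq_inv_of_mul_eq_one_left hεK
  -- continuity of `lap ψ`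
  have hψ1 : ContDiff ℝ 1 (fderiv ℝ ψ) := hψ.fderiv_right (by norm_num)
  have hlapψc : Continuous (lap ψ) := by
    unfold lap
    apply continuous_finset_sum
    intro i _
    have h1 : ContDiff ℝ 1 (fun y => fderiv ℝ ψ y (EuclideanSpace.single i 1)) :=
      hψ1.clm_apply contDiff_const
    have h2 := h1.continuous_fderiv one_ne_zero
    exact (ContinuousLinearMap.apply ℝ ℝ (EuclideanSpace.single i 1)).continuous.comp h2
  -- ρ vanishes on the frontier
  have hρ0 : ∀ x ∈ frontier Ω, ρ x = 0 := by
    intro x hx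
    have hxcl : x ∈ closure Ω := frontier_subset_closure hx
    have hxΩ : x ∉ Ω := by
      rw [hΩo.frontier_eq] at hx; exact hx.2
    have hne : (𝓝[Ω] x).NeBot := mem_closure_iff_nhdsWithin_neBot.1 hxcl
    have h1 : Filter.Tendsto ρ (𝓝[Ω] x) (𝓝 (ρ x)) :=
      (hρc x hxcl).mono_left (nhdsWithin_mono x subset_closure)
    have h2 : Filter.Tendsto ρ (𝓝[Ω] x) (𝓝 (lap ψ x)) := by
      apply Filter.Tendsto.congr' _ ((hlapψc.tendsto x).mono_left nhdsWithin_le_nhds)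
      filter_upwards [self_mem_nhdsWithin] with y hy
      rw [hpois y, Set.indicator_of_mem hy]
    have h3 : ρ x = lap ψ x := tendsto_nhds_unique h1 h2
    rw [h3, hpois x, Set.indicator_of_notMem hxΩ]
  -- facts about the transition function
  have hdcont : Continuous (deriv Real.smoothTransition) :=
    (Real.smoothTransition.contDiff (n := 2)).continuous_deriv (by norm_num)
  have hd_lo : ∀ s : ℝ, s < 0 → deriv Real.smoothTransition s = 0 := by
    intro s hs
    have hev : Real.smoothTransition =ᶠ[𝓝 s] fun _ => (0:ℝ) := by
      filter_upwards [Iio_mem_nhds hs] with t ht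
      exact Real.smoothTransition.zero_of_nonpos (le_of_lt ht)
    rw [hev.deriv_eq]; exact deriv_const s 0
  have hd_hi : ∀ s : ℝ, 1 < s → deriv Real.smoothTransition s = 0 := by
    intro s hs
    have hev : Real.smoothTransition =ᶠ[𝓝 s] fun _ => (1:ℝ) := by
      filter_upwards [Ioi_mem_nhds hs] with t ht
      exact Real.smoothTransition.one_of_one_le (le_of_lt ht)
    rw [hev.deriv_eq]; exact deriv_const s 1
  obtain ⟨C₀, hC₀⟩ : ∃ C, ∀ s ∈ Set.Icc (0:ℝ) 1, |deriv Real.smoothTransition s| ≤ C :=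
    isCompact_Icc.exists_bound_of_continuousOn hdcont.continuousOn
  have hC₀0 : 0 ≤ C₀ := le_trans (abs_nonneg _) (hC₀ 0 ⟨le_refl 0, zero_le_one⟩)
  have hζbd : ∀ t : ℝ, 0 ≤ t →
      |Real.smoothTransition (t - 1) + t * deriv Real.smoothTransition (t - 1)| ≤ 1 + 2 * C₀ := by
    intro t ht
    have h1 : |Real.smoothTransition (t - 1)| ≤ 1 := by
      rw [abs_le]
      exact ⟨by linarith [Real.smoothTransition.nonneg (t-1)], Real.smoothTransition.le_one _⟩
    have h2 : |t * deriv Real.smoothTransition (t - 1)| ≤ 2 * C₀ := by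
      rcases lt_or_ge (t - 1) 0 with h | h
      · rw [hd_lo _ h, mul_zero, abs_zero]; positivity
      rcases lt_or_ge 1 (t - 1) with h' | h'
      · rw [hd_hi _ h', mul_zero, abs_zero]; positivity
      · have hb : |deriv Real.smoothTransition (t - 1)| ≤ C₀ := hC₀ _ ⟨h, h'⟩
        have ht2 : t ≤ 2 := by linarith
        rw [abs_mul, abs_of_nonneg ht]
        nlinarith [abs_nonneg (deriv Real.smoothTransition (t - 1))]
    calc |Real.smoothTransition (t - 1) + t * deriv Real.smoothTransition (t - 1)|
        ≤ |Real.smoothTransition (t - 1)| + |t * deriv Real.smoothTransition (t - 1)| :=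
          abs_add_le _ _
      _ ≤ 1 + 2 * C₀ := add_le_add h1 h2
  -- regularity of the cutoff fields up to the closure
  have hWcl : ∀ k : ℕ, ContDiffOn ℝ 1 (auxW K ρ θ ψ k) (closure Ω) := by
    intro k
    have hWΩ : ContDiffOn ℝ 1 (auxW K ρ θ ψ k) Ω := by
      rw [contDiffOn_euclidean]
      intro i
      rw [show (fun y => auxW K ρ θ ψ k y i) = _ from auxW_coord K ρ θ ψ k i]
      have hθfd : ContDiffOn ℝ 1 (fderiv ℝ θ) Ω :=
        (hθ.mono subset_closure).fderiv_of_isOpen hΩo (by norm_num)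
      have hθi : ContDiffOn ℝ 1 (fun y => fderiv ℝ θ y (EuclideanSpace.single i 1)) Ω :=
        hθfd.clm_apply contDiffOn_const
      have hψi : ContDiffOn ℝ 1 (fun y => fderiv ℝ ψ y (EuclideanSpace.single i 1)) Ω :=
        (hψ1.clm_apply contDiff_const).contDiffOn
      have hlin : ContDiffOn ℝ 1 (fun y => (k:ℝ) * ρ y - 1) Ω :=
        (contDiffOn_const.mul hρ).sub contDiffOn_const
      have hcut : ContDiffOn ℝ 1 (fun y => Real.smoothTransition ((k:ℝ) * ρ y - 1)) Ω :=
        (Real.smoothTransition.contDiff (n := 1)).comp_contDiffOn hlin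
      exact hcut.mul ((hρ.neg).mul (hθi.add (hψi.const_smul K⁻¹)))
    intro x hx
    by_cases hxΩ : x ∈ Ω
    · exact ((hWΩ x hxΩ).contDiffAt (hΩo.mem_nhds hxΩ)).contDiffWithinAt
    · have hxf : x ∈ frontier Ω := by rw [hΩo.frontier_eq]; exact ⟨hx, hxΩ⟩
      have hρx : ρ x = 0 := hρ0 x hxf
      have hev : ∀ᶠ y in 𝓝[closure Ω] x, auxW K ρ θ ψ k y = 0 := by
        have ht : Filter.Tendsto (fun y => (k:ℝ) * ρ y) (𝓝[closure Ω] x) (𝓝 0) := by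
          have := (tendsto_const_nhds (x := (k:ℝ))).mul (hρc x hx)
          rwa [hρx, mul_zero] at this
        filter_upwards [ht.eventually_lt_const one_pos] with y hy
        show Real.smoothTransition ((k:ℝ) * ρ y - 1) • ((-ρ y) • auxG K θ ψ y) = 0
        rw [show Real.smoothTransition ((k:ℝ) * ρ y - 1) = 0 from
          Real.smoothTransition.zero_of_nonpos (by linarith), zero_smul]
      have hx0 : auxW K ρ θ ψ k x = 0 := by
        show Real.smoothTransition ((k:ℝ) * ρ x - 1) • ((-ρ x) • auxG K θ ψ x) = 0
        rw [hρx, mul_zero, zero_sub,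
          show Real.smoothTransition (-1:ℝ) = 0 from
            Real.smoothTransition.zero_of_nonpos (by norm_num), zero_smul]
      exact (contDiffWithinAt_const (c := (0:E))).congr_of_eventuallyEq hev hx0
  -- the boundary integrals vanish
  have hbd : ∀ k : ℕ, ∫ x in frontier Ω, ⟪auxW K ρ θ ψ k x, n x⟫ ∂μ = 0 := by
    intro k
    rw [setIntegral_congr_fun (isClosed_frontier).measurableSet
      (g := fun _ => (0:ℝ)) ?_, integral_zero]
    intro x hx
    have hρx : ρ x = 0 := hρ0 x hx
    have hx0 : auxW K ρ θ ψ k x = 0 := by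
      show Real.smoothTransition ((k:ℝ) * ρ x - 1) • ((-ρ x) • auxG K θ ψ x) = 0
      rw [hρx, mul_zero, zero_sub,
        show Real.smoothTransition (-1:ℝ) = 0 from
          Real.smoothTransition.zero_of_nonpos (by norm_num), zero_smul]
    simp [hx0]
  -- pointwise divergence identity
  have hdiv : ∀ (k : ℕ), ∀ x ∈ Ω, divg (auxW K ρ θ ψ k) x
      = auxζ ρ k x * ((θ x / ρ x) * ‖gradient ρ x‖ ^ 2) := by
    intro k x hxΩ
    have hΩx : Ω ∈ 𝓝 x := hΩo.mem_nhds hxΩ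
    have hclx : closure Ω ∈ 𝓝 x := Filter.mem_of_superset hΩx subset_closure
    have hρposx := hρpos x hxΩ
    have hρnz : ρ x ≠ 0 := ne_of_gt hρposx
    -- derivatives
    have hρat : ContDiffAt ℝ 1 ρ x := (hρ x hxΩ).contDiffAt hΩx
    have hρd : HasFDerivAt ρ (fderiv ℝ ρ x) x := (hρat.differentiableAt one_ne_zero).hasFDerivAt
    set ρ' := fderiv ℝ ρ x with hρ'def
    have hθat : ContDiffAt ℝ 2 θ x := (hθ x (subset_closure hxΩ)).contDiffAt hclx
    have hθd : HasFDerivAt θ (fderiv ℝ θ x) x :=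
      (hθat.differentiableAt (by norm_num)).hasFDerivAt
    set θ' := fderiv ℝ θ x with hθ'def
    have hθ2at : ContDiffAt ℝ 1 (fderiv ℝ θ) x := hθat.fderiv_right (by norm_num)
    have hθ2 : HasFDerivAt (fderiv ℝ θ) (fderiv ℝ (fderiv ℝ θ) x) x :=
      (hθ2at.differentiableAt one_ne_zero).hasFDerivAt
    set Aθ := fderiv ℝ (fderiv ℝ θ) x with hAθdef
    have hψd : HasFDerivAt ψ (fderiv ℝ ψ x) x :=
      (hψ.differentiable (by norm_num)).differentiableAt.hasFDerivAt
    set ψ' := fderiv ℝ ψ x with hψ'def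
    have hψ2 : HasFDerivAt (fderiv ℝ ψ) (fderiv ℝ (fderiv ℝ ψ) x) x :=
      ((hψ1.differentiable one_ne_zero).differentiableAt).hasFDerivAt
    set Aψ := fderiv ℝ (fderiv ℝ ψ) x with hAψdef
    have hχd : HasDerivAt Real.smoothTransition
        (deriv Real.smoothTransition ((k:ℝ) * ρ x - 1)) ((k:ℝ) * ρ x - 1) :=
      ((Real.smoothTransition.contDiff (n := 1)).differentiable one_ne_zero _).hasDerivAt
    have hlin : HasFDerivAt (fun y => (k:ℝ) * ρ y - 1) ((k:ℝ) • ρ') x :=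
      (hρd.const_mul ((k:ℝ))).sub_const 1
    have hχ : HasFDerivAt (fun y => Real.smoothTransition ((k:ℝ) * ρ y - 1))
        (deriv Real.smoothTransition ((k:ℝ) * ρ x - 1) • ((k:ℝ) • ρ')) x :=
      by have := hχd.comp_hasFDerivAt x hlin; exact this
    set L : Fin 3 → (E →L[ℝ] ℝ) →L[ℝ] ℝ :=
      fun i => ContinuousLinearMap.apply ℝ ℝ (EuclideanSpace.single i 1) with hLdef
    -- second derivative fields
    have hθsnd : ∀ i : Fin 3, HasFDerivAt
        (fun y => fderiv ℝ θ y (EuclideanSpace.single i 1)) ((L i).comp Aθ) x :=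
      fun i => (L i).hasFDerivAt.comp x hθ2
    have hψsnd : ∀ i : Fin 3, HasFDerivAt
        (fun y => fderiv ℝ ψ y (EuclideanSpace.single i 1)) ((L i).comp Aψ) x :=
      fun i => (L i).hasFDerivAt.comp x hψ2
    -- coordinate momentum relation
    have hmomx := hmom x hxΩ
    have F3 : ∀ i : Fin 3, ρ x * (θ' (EuclideanSpace.single i 1)
        + K⁻¹ * ψ' (EuclideanSpace.single i 1))
        = -(θ x) * ρ' (EuclideanSpace.single i 1) := by
      intro i
      have hco := congrArg (fun v : E => v i) hmomx
      simp only [PiLp.smul_apply, smul_eq_mul] at hco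
      rw [grad_coord, grad_coord, (show fderiv ℝ (fun y => ρ y * θ y) x = _ from (hρd.mul hθd).fderiv)] at hco
      simp only [ContinuousLinearMap.add_apply, ContinuousLinearMap.smul_apply,
        smul_eq_mul] at hco
      rw [← hψ'def] at hco
      field_simp
      linear_combination hco
    -- Laplacian identities
    have hlapθeq : ∑ i : Fin 3, ((L i).comp Aθ) (EuclideanSpace.single i 1) = lap θ x := by
      unfold lap
      apply Finset.sum_congr rfl
      intro i _
      rw [(hθsnd i).fderiv]
    have hlapψeq : ∑ i : Fin 3, ((L i).comp Aψ) (EuclideanSpace.single i 1) = lap ψ x := by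
      unfold lap
      apply Finset.sum_congr rfl
      intro i _
      rw [(hψsnd i).fderiv]
    have hθval : lap θ x = -(ε * ρ x) := by linarith [hheat x hxΩ]
    have hψval : lap ψ x = ρ x := by rw [hpois x, Set.indicator_of_mem hxΩ]
    -- per-coordinate derivative of W
    have hWi : ∀ i : Fin 3, HasFDerivAt
        (fun y => Real.smoothTransition ((k:ℝ) * ρ y - 1)
          * ((-ρ y) * (fderiv ℝ θ y (EuclideanSpace.single i 1)
          + K⁻¹ * fderiv ℝ ψ y (EuclideanSpace.single i 1))))
        (Real.smoothTransition ((k:ℝ) * ρ x - 1)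
            • ((-ρ x) • ((L i).comp Aθ + K⁻¹ • ((L i).comp Aψ))
            + ((θ' (EuclideanSpace.single i 1) + K⁻¹ * ψ' (EuclideanSpace.single i 1)) • (-ρ')))
          + ((-ρ x) * (θ' (EuclideanSpace.single i 1)
              + K⁻¹ * ψ' (EuclideanSpace.single i 1)))
            • (deriv Real.smoothTransition ((k:ℝ) * ρ x - 1) • ((k:ℝ) • ρ'))) x := by
      intro i
      have hGi : HasFDerivAt (fun y => fderiv ℝ θ y (EuclideanSpace.single i 1)
          + K⁻¹ * fderiv ℝ ψ y (EuclideanSpace.single i 1))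
          ((L i).comp Aθ + K⁻¹ • ((L i).comp Aψ)) x :=
        (hθsnd i).add ((hψsnd i).const_mul K⁻¹)
      have hmulin : HasFDerivAt (fun y => (-ρ y) * (fderiv ℝ θ y (EuclideanSpace.single i 1)
          + K⁻¹ * fderiv ℝ ψ y (EuclideanSpace.single i 1)))
          ((-ρ x) • ((L i).comp Aθ + K⁻¹ • ((L i).comp Aψ))
            + ((θ' (EuclideanSpace.single i 1) + K⁻¹ * ψ' (EuclideanSpace.single i 1)) • (-ρ'))) x :=
        (hρd.neg).mul hGi
      exact hχ.mul hmulin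
    -- compute each term of the divergence
    have hterm : ∀ i : Fin 3,
        fderiv ℝ (fun y => auxW K ρ θ ψ k y i) x (EuclideanSpace.single i 1)
          = Real.smoothTransition ((k:ℝ) * ρ x - 1)
              * ((-ρ x) * (((L i).comp Aθ) (EuclideanSpace.single i 1)
              + K⁻¹ * ((L i).comp Aψ) (EuclideanSpace.single i 1)))
            + auxζ ρ k x * ((θ x / ρ x) * (ρ' (EuclideanSpace.single i 1))^2) := by
      intro i
      rw [show (fun y => auxW K ρ θ ψ k y i) = _ from auxW_coord K ρ θ ψ k i,
        (hWi i).fderiv]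
      have hgi : θ' (EuclideanSpace.single i 1) + K⁻¹ * ψ' (EuclideanSpace.single i 1)
          = -(θ x / ρ x) * ρ' (EuclideanSpace.single i 1) := by
        have := F3 i
        field_simp at this ⊢
        linarith [this]
      simp only [ContinuousLinearMap.add_apply, ContinuousLinearMap.smul_apply,
        ContinuousLinearMap.neg_apply, smul_eq_mul, auxζ]
      rw [hgi]
      ring
    -- sum up
    have hCsum : ∑ i : Fin 3, (((L i).comp Aθ) (EuclideanSpace.single i 1)
        + K⁻¹ * ((L i).comp Aψ) (EuclideanSpace.single i 1)) = 0 := by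
      rw [Finset.sum_add_distrib, ← Finset.mul_sum, hlapθeq, hlapψeq, hθval, hψval, hεinv]
      ring
    have hS : ∑ i : Fin 3, (ρ' (EuclideanSpace.single i 1))^2 = ‖gradient ρ x‖^2 := by
      rw [norm_sq_coord]
      exact Finset.sum_congr rfl fun i _ => by rw [grad_coord, ← hρ'def]
    unfold divg
    calc ∑ i : Fin 3, fderiv ℝ (fun y => auxW K ρ θ ψ k y i) x (EuclideanSpace.single i 1)
        = ∑ i : Fin 3, (Real.smoothTransition ((k:ℝ) * ρ x - 1)
              * ((-ρ x) * (((L i).comp Aθ) (EuclideanSpace.single i 1)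
              + K⁻¹ * ((L i).comp Aψ) (EuclideanSpace.single i 1)))
            + auxζ ρ k x * ((θ x / ρ x) * (ρ' (EuclideanSpace.single i 1))^2)) :=
          Finset.sum_congr rfl fun i _ => hterm i
      _ = Real.smoothTransition ((k:ℝ) * ρ x - 1)
            * ((-ρ x) * ∑ i : Fin 3, (((L i).comp Aθ) (EuclideanSpace.single i 1)
              + K⁻¹ * ((L i).comp Aψ) (EuclideanSpace.single i 1)))
          + auxζ ρ k x * ((θ x / ρ x) * ∑ i : Fin 3, (ρ' (EuclideanSpace.single i 1))^2) := by
          simp only [Finset.mul_sum]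
          rw [← Finset.sum_add_distrib]
      _ = auxζ ρ k x * ((θ x / ρ x) * ‖gradient ρ x‖ ^ 2) := by
          rw [hCsum, hS]; ring
  -- each interior integral vanishes
  have hIk : ∀ k : ℕ, ∫ x in Ω, auxζ ρ k x * ((θ x / ρ x) * ‖gradient ρ x‖ ^ 2) = 0 := by
    intro k
    have h1 : ∫ x in Ω, divg (auxW K ρ θ ψ k) x
        = ∫ x in Ω, auxζ ρ k x * ((θ x / ρ x) * ‖gradient ρ x‖ ^ 2) :=
      setIntegral_congr_fun hΩo.measurableSet (fun x hx => hdiv k x hx)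
    rw [← h1, hdivthm (auxW K ρ θ ψ k) (hWcl k), hbd k]
  -- integrability and measurability
  have hgcont : ContinuousOn (fun x => (θ x / ρ x) * ‖gradient ρ x‖ ^ 2) Ω := by
    have h1 : ContinuousOn (fun x => fderiv ℝ ρ x) Ω :=
      hρ.continuousOn_fderiv_of_isOpen hΩo le_rfl
    have h2 : ContinuousOn (fun x => ‖gradient ρ x‖ ^ 2) Ω := by
      have heq : ∀ x : E, ‖gradient ρ x‖ = ‖fderiv ℝ ρ x‖ := fun x =>
        (InnerProductSpace.toDual ℝ E).symm.norm_map (fderiv ℝ ρ x)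
      have h3 : ContinuousOn (fun x => ‖fderiv ℝ ρ x‖ ^ 2) Ω := (h1.norm).pow 2
      exact h3.congr (fun x _ => by rw [heq x])
    exact ((hθ.continuousOn.mono subset_closure).div hρ.continuousOn
      (fun x hx => ne_of_gt (hρpos x hx))).mul h2
  have hgint : IntegrableOn (fun x => (θ x / ρ x) * ‖gradient ρ x‖ ^ 2) Ω := by
    by_contra hcon
    rw [integral_undef hcon] at hint
    exact lt_irrefl 0 hint
  have hζcont : ∀ k : ℕ, ContinuousOn (fun x => auxζ ρ k x) Ω := by
    intro k
    have h1 : ContinuousOn (fun x => (k:ℝ) * ρ x - 1) Ω :=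
      (continuousOn_const.mul (hρ.continuousOn)).sub continuousOn_const
    unfold auxζ
    exact ((Real.smoothTransition.continuous.comp_continuousOn h1)).add
      ((continuousOn_const.mul hρ.continuousOn).mul (hdcont.comp_continuousOn h1))
  -- dominated convergence
  have hmain : Filter.Tendsto
      (fun k : ℕ => ∫ x in Ω, auxζ ρ k x * ((θ x / ρ x) * ‖gradient ρ x‖ ^ 2))
      Filter.atTop (𝓝 (∫ x in Ω, (θ x / ρ x) * ‖gradient ρ x‖ ^ 2)) := by
    apply tendsto_integral_of_dominated_convergence
      (fun x => (1 + 2 * C₀) * |(θ x / ρ x) * ‖gradient ρ x‖ ^ 2|)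
    · intro k
      exact ((hζcont k).mul hgcont).aestronglyMeasurable hΩo.measurableSet
    · exact (hgint.abs).const_mul _
    · intro k
      rw [ae_restrict_iff' hΩo.measurableSet]
      filter_upwards with x hx
      have ht : (0:ℝ) ≤ (k:ℝ) * ρ x :=
        mul_nonneg (Nat.cast_nonneg k) (le_of_lt (hρpos x hx))
      have h1 := hζbd ((k:ℝ) * ρ x) ht
      rw [Real.norm_eq_abs, abs_mul]
      exact mul_le_mul_of_nonneg_right h1 (abs_nonneg _)
    · rw [ae_restrict_iff' hΩo.measurableSet]
      filter_upwards with x hx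
      have hρposx := hρpos x hx
      apply Filter.Tendsto.congr'
        _ (tendsto_const_nhds (x := (θ x / ρ x) * ‖gradient ρ x‖ ^ 2))
      rw [Filter.EventuallyEq, Filter.eventually_atTop]
      refine ⟨⌈3 / ρ x⌉₊, fun k hk => ?_⟩
      have h3 : 3 / ρ x ≤ (k:ℝ) := le_trans (Nat.le_ceil _) (Nat.cast_le.mpr hk)
      have h4 : 3 ≤ (k:ℝ) * ρ x := by
        rw [div_le_iff₀ hρposx] at h3
        nlinarith
      have hη1 : Real.smoothTransition ((k:ℝ) * ρ x - 1) = 1 :=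
        Real.smoothTransition.one_of_one_le (by linarith)
      have hd1 : deriv Real.smoothTransition ((k:ℝ) * ρ x - 1) = 0 := hd_hi _ (by linarith)
      show (θ x / ρ x) * ‖gradient ρ x‖ ^ 2 = auxζ ρ k x * ((θ x / ρ x) * ‖gradient ρ x‖ ^ 2)
      rw [auxζ, hη1, hd1]
      ring
  have hfinal : ∫ x in Ω, (θ x / ρ x) * ‖gradient ρ x‖ ^ 2 = 0 := by
    have h1 : Filter.Tendsto (fun _ : ℕ => (0:ℝ)) Filter.atTop
        (𝓝 (∫ x in Ω, (θ x / ρ x) * ‖gradient ρ x‖ ^ 2)) := by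
      apply hmain.congr
      intro k
      rw [hIk k]
    exact tendsto_nhds_unique h1 tendsto_const_nhds
  rw [hfinal] at hint
  exact lt_irrefl 0 hint
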